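/- Let e_0, …, e_{2N} be pairwise distinct points on the unit circle with e_{2j+1} = -e_{2j} and e_{2j}² = e_j for 0 ≤ j ≤ N. Then for 0 ≤ j ≤ N-1 and all z ∈ ℂ: l_{2j,2N+1}(z) = [(z - e_{2N})(z + e_{2j})(e_{2j} + e_{2N})] / [2 e_{2j} (e_j - e_N)] · l_{j,N}(z²), where l_{j,k}(z) = Π_{i≠j, 0≤i<k} (z - e_i)/(e_j - e_i). -/

import Mathlib

/-- The fundamental Lagrange interpolation polynomial `l_{j,k}` at nodes `e 0, …, e (k-1)`. -/
noncomputable def lagr (e : ℕ → ℂ) (j k : ℕ) (z : ℂ) : ℂ :=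
  ∏ i ∈ (Finset.range k).erase j, (z - e i) / (e j - e i)

theorem stmt11 (N : ℕ) (hN : 1 ≤ N) (e : ℕ → ℂ)
    (hdist : ∀ i ≤ 2 * N, ∀ j ≤ 2 * N, i ≠ j → e i ≠ e j)
    (hmod : ∀ i ≤ 2 * N, ‖e i‖ = 1)
    (hneg : ∀ j ≤ N, e (2 * j + 1) = -e (2 * j))
    (hsq : ∀ j ≤ N, (e (2 * j)) ^ 2 = e j)
    (j : ℕ) (hj : j ≤ N - 1) (z : ℂ) :
    lagr e (2 * j) (2 * N + 1) z =
      (z - e (2 * N)) * (z + e (2 * j)) * (e (2 * j) + e (2 * N)) /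
        (2 * e (2 * j) * (e j - e N)) * lagr e j N (z ^ 2) := by
  have hjN : j < N := by omega
  have h0 : e (2*j) ≠ 0 := by
    intro h
    have := hmod (2*j) (by omega)
    rw [h] at this; simp at this
  have hj_ne : e j ≠ e N := hdist j (by omega) N (by omega) (by omega)
  have hsub : e (2*j) - e (2*N) ≠ 0 := by
    have := hdist (2*j) (by omega) (2*N) (by omega) (by omega)
    intro h; exact this (by linear_combination h)
  have hfact : e j - e N = (e (2*j) - e (2*N)) * (e (2*j) + e (2*N)) := by
    have h1 := hsq j (by omega)
    have h2 := hsq N (by omega)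
    linear_combination -h1 + h2
  have hadd : e (2*j) + e (2*N) ≠ 0 := by
    intro h
    exact hj_ne (by linear_combination hfact + (e (2*j) - e (2*N)) * h)
  have hjNne : e j - e N ≠ 0 := sub_ne_zero.mpr hj_ne
  set f : ℕ → ℂ := fun i => (z - e i) / (e (2*j) - e i) with hf
  have key : (Finset.range (2*N+1)).erase (2*j)
      = insert (2*N) (insert (2*j+1)
          (((Finset.range N).erase j).biUnion (fun i => {2*i, 2*i+1}))) := by
    ext x
    simp only [Finset.mem_erase, Finset.mem_range, Finset.mem_insert,
      Finset.mem_biUnion, Finset.mem_singleton]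
    constructor
    · rintro ⟨hx1, hx2⟩
      by_cases h1 : x = 2*N
      · exact Or.inl h1
      right
      by_cases h2 : x = 2*j+1
      · exact Or.inl h2
      right
      exact ⟨x/2, ⟨by omega, by omega⟩, by omega⟩
    · rintro (h | h | ⟨i, ⟨hi1, hi2⟩, hx⟩) <;> omega
  have hdisj : (↑((Finset.range N).erase j) : Set ℕ).PairwiseDisjoint
      (fun i => ({2*i, 2*i+1} : Finset ℕ)) := by
    intro a _ b _ hab
    simp only [Function.onFun, Finset.disjoint_left, Finset.mem_insert,
      Finset.mem_singleton]
    omega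
  have h2N : (2*N) ∉ insert (2*j+1)
      (((Finset.range N).erase j).biUnion (fun i => {2*i, 2*i+1})) := by
    simp only [Finset.mem_insert, Finset.mem_biUnion, Finset.mem_erase,
      Finset.mem_range, Finset.mem_singleton, not_or, not_exists]
    exact ⟨by omega, by omega⟩
  have h2j1 : (2*j+1) ∉ ((Finset.range N).erase j).biUnion
      (fun i => {2*i, 2*i+1}) := by
    simp only [Finset.mem_biUnion, Finset.mem_erase, Finset.mem_range,
      Finset.mem_insert, Finset.mem_singleton, not_exists]
    omega
  have step : lagr e (2*j) (2*N+1) z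
      = f (2*N) * (f (2*j+1) *
          ∏ i ∈ (Finset.range N).erase j, (f (2*i) * f (2*i+1))) := by
    rw [lagr, key, Finset.prod_insert h2N, Finset.prod_insert h2j1,
      Finset.prod_biUnion hdisj]
    congr 2
    apply Finset.prod_congr rfl
    intro i _
    rw [Finset.prod_pair (by omega)]
  have pairprod : ∀ i ∈ (Finset.range N).erase j,
      f (2*i) * f (2*i+1) = (z^2 - e i) / (e j - e i) := by
    intro i hi
    simp only [Finset.mem_erase, Finset.mem_range] at hi
    have hni := hneg i (by omega)
    have hsi := hsq i (by omega)
    have hsj := hsq j (by omega)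
    rw [hf]
    simp only
    rw [div_mul_div_comm, hni]
    congr 1
    · linear_combination -hsi
    · linear_combination hsj - hsi
  have cst : f (2*N) * f (2*j+1)
      = (z - e (2*N)) * (z + e (2*j)) * (e (2*j) + e (2*N)) /
          (2 * e (2*j) * (e j - e N)) := by
    rw [hf]
    simp only
    rw [hneg j (by omega), hfact]
    rw [show e (2*j) - -e (2*j) = 2 * e (2*j) by ring]
    field_simp
    ring
  rw [step, Finset.prod_congr rfl pairprod, ← mul_assoc, cst, lagr]
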